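/- For a single point p: the regular Kronecker representation ⊕_{j=1}^n R_{p,e_j} (with e_1 ≥ ... ≥ e_n) embeds into ⊕_{i=1}^m R_{p,b_i} (with b_1 ≥ ... ≥ b_m) if and only if m ≥ n and b_i ≥ e_i for all 1 ≤ i ≤ n. Equivalently, for nilpotent operators: given nilpotent endomorphisms with Jordan types (b_1,...,b_m) and (e_1,...,e_n), there is an injective linear map intertwining them if and only if m ≥ n and b_i ≥ e_i for all i ≤ n. -/

import Mathlib

open Matrix

/-- The map `β` of the regular Kronecker representation `⊕ᵢ R_{p, b i}` at a single
finite point `p`: block diagonal with blocks `p·I + J` (`J` the nilpotent upper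
Jordan block).  The map `α` is the identity. -/
def RpB (K : Type*) [Field K] (p : K) (m : ℕ) (b : ℕ → ℕ) :
    Matrix (Σ i : Fin m, Fin (b (i.1 + 1))) (Σ i : Fin m, Fin (b (i.1 + 1))) K :=
  fun x y =>
    if x.1 = y.1 then
      (if (x.2 : ℕ) = (y.2 : ℕ) then p else 0) +
        (if (y.2 : ℕ) = (x.2 : ℕ) + 1 then 1 else 0)
    else 0

/-- Block diagonal nilpotent matrix with upper Jordan blocks of sizes `b 1, …, b m`
(a nilpotent endomorphism of Jordan type `(b 1, …, b m)`). -/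
def Jnil (K : Type*) [Field K] (m : ℕ) (b : ℕ → ℕ) :
    Matrix (Σ i : Fin m, Fin (b (i.1 + 1))) (Σ i : Fin m, Fin (b (i.1 + 1))) K :=
  fun x y => if x.1 = y.1 ∧ (y.2 : ℕ) = (x.2 : ℕ) + 1 then 1 else 0


section Aux
variable {K : Type*} [Field K]

/-- Extend a block vector by zero. -/
def JExt {m : ℕ} {b : ℕ → ℕ} (v : (Σ i : Fin m, Fin (b (i.1 + 1))) → K)
    (i : Fin m) (t : ℕ) : K :=
  if h : t < b (i.1 + 1) then v ⟨i, ⟨t, h⟩⟩ else 0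

lemma JExt_apply {m : ℕ} {b : ℕ → ℕ} (v : (Σ i : Fin m, Fin (b (i.1 + 1))) → K)
    (x : Σ i : Fin m, Fin (b (i.1 + 1))) : JExt v x.1 (x.2 : ℕ) = v x := by
  obtain ⟨i, t⟩ := x
  simp [JExt]

lemma JExt_zero {m : ℕ} {b : ℕ → ℕ} (i : Fin m) (t : ℕ) :
    JExt (0 : (Σ i : Fin m, Fin (b (i.1 + 1))) → K) i t = 0 := by
  unfold JExt; split <;> rfl

lemma vec_eq_of_JExt {m : ℕ} {b : ℕ → ℕ} {v w : (Σ i : Fin m, Fin (b (i.1 + 1))) → K}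
    (h : ∀ i t, JExt v i t = JExt w i t) : v = w := by
  funext x
  rw [← JExt_apply v x, ← JExt_apply w x, h]

lemma Jnil_mulVec {m : ℕ} {b : ℕ → ℕ} (v : (Σ i : Fin m, Fin (b (i.1 + 1))) → K)
    (x : Σ i : Fin m, Fin (b (i.1 + 1))) :
    (Jnil K m b *ᵥ v) x = JExt v x.1 ((x.2 : ℕ) + 1) := by
  rw [mulVec, dotProduct]
  unfold JExt
  split
  case isTrue h =>
    rw [Finset.sum_eq_single (⟨x.1, ⟨(x.2 : ℕ) + 1, h⟩⟩ : Σ i : Fin m, Fin (b (i.1 + 1)))]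
    · simp [Jnil]
    · intro y _ hy
      unfold Jnil
      split
      case isTrue hc =>
        exfalso
        apply hy
        obtain ⟨j, t⟩ := y
        obtain ⟨h1, h2⟩ := hc
        cases h1
        simp only [Sigma.mk.inj_iff, heq_eq_eq, true_and]
        ext
        exact h2
      case isFalse => simp
    · intro hne; exact absurd (Finset.mem_univ _) hne
  case isFalse h =>
    apply Finset.sum_eq_zero
    intro y _
    unfold Jnil
    split
    case isTrue hc =>
      exfalso
      obtain ⟨h1, h2⟩ := hc
      have hlt := y.2.isLt
      have hbb : b (y.1.1 + 1) = b (x.1.1 + 1) := by rw [← h1]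
      omega
    case isFalse => simp

lemma JExt_mulVec {m : ℕ} {b : ℕ → ℕ} (v : (Σ i : Fin m, Fin (b (i.1 + 1))) → K)
    (i : Fin m) (t : ℕ) :
    JExt (Jnil K m b *ᵥ v) i t = JExt v i (t + 1) := by
  by_cases h : t < b (i.1 + 1)
  · rw [show JExt (Jnil K m b *ᵥ v) i t = (Jnil K m b *ᵥ v) ⟨i, ⟨t, h⟩⟩ from dif_pos h,
      Jnil_mulVec]
  · unfold JExt
    rw [dif_neg h, dif_neg (by omega)]

lemma JExt_pow {m : ℕ} {b : ℕ → ℕ} (j : ℕ) (v : (Σ i : Fin m, Fin (b (i.1 + 1))) → K)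
    (i : Fin m) (t : ℕ) :
    JExt (((Jnil K m b).mulVecLin ^ j) v) i t = JExt v i (t + j) := by
  induction j generalizing v with
  | zero => simp
  | succ j ih =>
    rw [pow_succ, Module.End.mul_apply, ih, mulVecLin_apply, JExt_mulVec]
    congr 1

end Aux

section Core
variable {K : Type*} [Field K]

/-- Vectors supported on the top coordinate of blocks of size `> k`:
this is `ker J ⊓ range (J^k)`. -/
def Wmod (K : Type*) [Field K] (m : ℕ) (b : ℕ → ℕ) (k : ℕ) :
    Submodule K ((Σ i : Fin m, Fin (b (i.1 + 1))) → K) where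
  carrier := {v | ∀ x : Σ i : Fin m, Fin (b (i.1 + 1)),
    ¬((x.2 : ℕ) = 0 ∧ k + 1 ≤ b (x.1.1 + 1)) → v x = 0}
  add_mem' := by
    intro a c ha hc x hx
    simp [ha x hx, hc x hx]
  zero_mem' := by intro x hx; rfl
  smul_mem' := by
    intro r a ha x hx
    simp [ha x hx]

lemma JExt_eq_zero_of_mem {m : ℕ} {b : ℕ → ℕ} {k : ℕ}
    {v : (Σ i : Fin m, Fin (b (i.1 + 1))) → K} (hv : v ∈ Wmod K m b k)
    {i : Fin m} {t : ℕ} (h : ¬(t = 0 ∧ k + 1 ≤ b (i.1 + 1))) : JExt v i t = 0 := by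
  unfold JExt
  split
  case isTrue ht => exact hv ⟨i, ⟨t, ht⟩⟩ h
  case isFalse => rfl

lemma mem_Wmod_iff {m : ℕ} {b : ℕ → ℕ} {k : ℕ}
    {v : (Σ i : Fin m, Fin (b (i.1 + 1))) → K} :
    v ∈ Wmod K m b k ↔
      (Jnil K m b).mulVecLin v = 0 ∧ ∃ w, ((Jnil K m b).mulVecLin ^ k) w = v := by
  constructor
  · intro hv
    refine ⟨?_, ?_⟩
    · funext x
      rw [mulVecLin_apply, Jnil_mulVec]
      exact JExt_eq_zero_of_mem hv (by omega)
    · refine ⟨fun x => if (x.2 : ℕ) = k then JExt v x.1 0 else 0, ?_⟩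
      apply vec_eq_of_JExt
      intro i t
      rw [JExt_pow]
      unfold JExt
      split
      case isTrue h1 =>
        simp only []
        split
        case isTrue h2 =>
          -- t + k = k, so t = 0 and k < b (i+1)
          have ht : t = 0 := by omega
          subst ht
          rfl
        case isFalse h2 =>
          -- t ≥ 1
          exact (JExt_eq_zero_of_mem hv (by omega)).symm
      case isFalse h1 =>
        exact (JExt_eq_zero_of_mem hv (by omega)).symm
  · rintro ⟨hker, w, rfl⟩
    intro x hx
    rw [show (((Jnil K m b).mulVecLin ^ k) w) x = JExt (((Jnil K m b).mulVecLin ^ k) w) x.1 (x.2 : ℕ) from (JExt_apply _ x).symm]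
    rcases Nat.eq_zero_or_pos (x.2 : ℕ) with h0 | hpos
    · -- x.2 = 0, so b (x.1+1) ≤ k
      rw [JExt_pow]
      unfold JExt
      rw [dif_neg (by omega)]
    · obtain ⟨s, hs⟩ : ∃ s, (x.2 : ℕ) = s + 1 := ⟨(x.2 : ℕ) - 1, by omega⟩
      rw [hs, ← JExt_mulVec, ← mulVecLin_apply, hker, JExt_zero]
end Core

section Core2
variable {K : Type*} [Field K]

lemma pow_comm_of_intertwine {m n : ℕ} {b e : ℕ → ℕ}
    (T : Matrix (Σ i : Fin m, Fin (b (i.1 + 1))) (Σ j : Fin n, Fin (e (j.1 + 1))) K)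
    (hT : Jnil K m b * T = T * Jnil K n e) (k : ℕ) :
    ((Jnil K m b).mulVecLin ^ k).comp T.mulVecLin
      = T.mulVecLin.comp ((Jnil K n e).mulVecLin ^ k) := by
  have h1 : (Jnil K m b).mulVecLin.comp T.mulVecLin
      = T.mulVecLin.comp (Jnil K n e).mulVecLin := by
    rw [← mulVecLin_mul, ← mulVecLin_mul, hT]
  induction k with
  | zero => ext v; simp
  | succ k ih =>
    rw [pow_succ', pow_succ']
    calc ((Jnil K m b).mulVecLin * (Jnil K m b).mulVecLin ^ k).comp T.mulVecLin
        = (Jnil K m b).mulVecLin.comp (((Jnil K m b).mulVecLin ^ k).comp T.mulVecLin) := by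
          ext v; simp [Module.End.mul_apply]
      _ = (Jnil K m b).mulVecLin.comp (T.mulVecLin.comp ((Jnil K n e).mulVecLin ^ k)) := by
          rw [ih]
      _ = ((Jnil K m b).mulVecLin.comp T.mulVecLin).comp ((Jnil K n e).mulVecLin ^ k) := by
          ext v; simp
      _ = (T.mulVecLin.comp (Jnil K n e).mulVecLin).comp ((Jnil K n e).mulVecLin ^ k) := by
          rw [h1]
      _ = T.mulVecLin.comp ((Jnil K n e).mulVecLin * (Jnil K n e).mulVecLin ^ k) := by
          ext v; simp [Module.End.mul_apply]

lemma map_Wmod {m n : ℕ} {b e : ℕ → ℕ}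
    (T : Matrix (Σ i : Fin m, Fin (b (i.1 + 1))) (Σ j : Fin n, Fin (e (j.1 + 1))) K)
    (hT : Jnil K m b * T = T * Jnil K n e) (k : ℕ)
    {v : (Σ j : Fin n, Fin (e (j.1 + 1))) → K} (hv : v ∈ Wmod K n e k) :
    T.mulVecLin v ∈ Wmod K m b k := by
  rw [mem_Wmod_iff] at hv ⊢
  obtain ⟨hker, w, hw⟩ := hv
  constructor
  · have := congrFun (congrArg DFunLike.coe (pow_comm_of_intertwine T hT 1)) v
    simp only [LinearMap.comp_apply, pow_one] at this
    rw [this, hker, map_zero]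
  · refine ⟨T.mulVecLin w, ?_⟩
    have := congrFun (congrArg DFunLike.coe (pow_comm_of_intertwine T hT k)) w
    simp only [LinearMap.comp_apply] at this
    rw [this, hw]

lemma finrank_Wmod (m : ℕ) (b : ℕ → ℕ) (k : ℕ) :
    Module.finrank K (Wmod K m b k) = Fintype.card {i : Fin m // k + 1 ≤ b (i.1 + 1)} := by
  set Φ : ({i : Fin m // k + 1 ≤ b (i.1 + 1)} → K) →ₗ[K]
      ((Σ i : Fin m, Fin (b (i.1 + 1))) → K) :=
    { toFun := fun c x =>
        if h : (x.2 : ℕ) = 0 ∧ k + 1 ≤ b (x.1.1 + 1) then c ⟨x.1, h.2⟩ else 0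
      map_add' := by
        intro c d; funext x; simp only [Pi.add_apply]; split_ifs with h <;> simp [h]
      map_smul' := by
        intro r c; funext x; simp only [Pi.smul_apply]; split_ifs with h <;> simp [h] } with hΦ
  have hinj : Function.Injective Φ := by
    intro c d h
    funext i
    have h0 : (0 : ℕ) < b (i.1.1 + 1) := by omega
    have := congrFun h ⟨i.1, ⟨0, h0⟩⟩
    simpa [hΦ, i.2, show k < b (i.1.1 + 1) from i.2] using this
  have hrange : LinearMap.range Φ = Wmod K m b k := by
    apply le_antisymm
    · rintro _ ⟨c, rfl⟩
      intro x hx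
      simp only [hΦ, LinearMap.coe_mk, AddHom.coe_mk]
      rw [dif_neg hx]
    · intro v hv
      have h0 : ∀ i : {i : Fin m // k + 1 ≤ b (i.1 + 1)}, (0 : ℕ) < b (i.1.1 + 1) := by
        intro i; omega
      refine ⟨fun i => v ⟨i.1, ⟨0, h0 i⟩⟩, ?_⟩
      funext x
      simp only [hΦ, LinearMap.coe_mk, AddHom.coe_mk]
      split_ifs with h
      · obtain ⟨i, t⟩ := x
        have ht : (⟨0, h0 ⟨i, h.2⟩⟩ : Fin (b (i.1 + 1))) = t := by
          ext; exact h.1.symm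
        exact congrArg v (Sigma.ext rfl (heq_of_eq ht))
      · exact (hv x h).symm
  rw [← hrange]
  rw [← Module.finrank_fintype_fun_eq_card K (η := {i : Fin m // k + 1 ≤ b (i.1 + 1)})]
  exact ((LinearEquiv.ofInjective Φ hinj).finrank_eq).symm

end Core2

section Core3
variable {K : Type*} [Field K]

lemma card_le_of_intertwine {m n : ℕ} {b e : ℕ → ℕ}
    (T : Matrix (Σ i : Fin m, Fin (b (i.1 + 1))) (Σ j : Fin n, Fin (e (j.1 + 1))) K)
    (hinj : Function.Injective T.mulVecLin)
    (hT : Jnil K m b * T = T * Jnil K n e) (k : ℕ) :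
    Fintype.card {j : Fin n // k + 1 ≤ e (j.1 + 1)}
      ≤ Fintype.card {i : Fin m // k + 1 ≤ b (i.1 + 1)} := by
  rw [← finrank_Wmod (K := K) n e k, ← finrank_Wmod (K := K) m b k]
  have heq : Module.finrank K (Wmod K n e k)
      = Module.finrank K (Submodule.map T.mulVecLin (Wmod K n e k)) :=
    (Submodule.equivMapOfInjective _ hinj _).finrank_eq
  have hle : Submodule.map T.mulVecLin (Wmod K n e k) ≤ Wmod K m b k := by
    rintro _ ⟨v, hv, rfl⟩
    exact map_Wmod T hT k hv
  rw [heq]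
  exact Submodule.finrank_mono hle

lemma counting {m n : ℕ} {b e : ℕ → ℕ}
    (hb_pos : ∀ i, 1 ≤ i → i ≤ m → 1 ≤ b i)
    (hb_mono : ∀ i j, 1 ≤ i → i ≤ j → j ≤ m → b j ≤ b i)
    (he_pos : ∀ i, 1 ≤ i → i ≤ n → 1 ≤ e i)
    (he_mono : ∀ i j, 1 ≤ i → i ≤ j → j ≤ n → e j ≤ e i)
    (hcard : ∀ k : ℕ, Fintype.card {j : Fin n // k + 1 ≤ e (j.1 + 1)}
      ≤ Fintype.card {i : Fin m // k + 1 ≤ b (i.1 + 1)}) :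
    n ≤ m ∧ ∀ i, 1 ≤ i → i ≤ n → e i ≤ b i := by
  have hnm : n ≤ m := by
    have h1 : n ≤ Fintype.card {j : Fin n // 0 + 1 ≤ e (j.1 + 1)} :=
      calc n = Fintype.card (Fin n) := (Fintype.card_fin n).symm
        _ ≤ _ := Fintype.card_le_of_injective
          (fun j => ⟨j, he_pos (j.1 + 1) (by omega) (by omega)⟩)
          (fun a c h => congrArg Subtype.val h)
    have h2 : Fintype.card {i : Fin m // 0 + 1 ≤ b (i.1 + 1)} ≤ m :=
      calc Fintype.card {i : Fin m // 0 + 1 ≤ b (i.1 + 1)}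
          ≤ Fintype.card (Fin m) := Fintype.card_subtype_le _
        _ = m := Fintype.card_fin m
    have := hcard 0
    omega
  refine ⟨hnm, ?_⟩
  intro i h1i hin
  by_contra hlt
  push_neg at hlt
  have hei : 1 ≤ e i := he_pos i h1i hin
  have hkey := hcard (e i - 1)
  have hk1 : e i - 1 + 1 = e i := by omega
  rw [hk1] at hkey
  have hlow : i ≤ Fintype.card {j : Fin n // e i ≤ e (j.1 + 1)} :=
    calc i = Fintype.card (Fin i) := (Fintype.card_fin i).symm
      _ ≤ _ := by
        refine Fintype.card_le_of_injective
          (fun t => ⟨⟨t.1, lt_of_lt_of_le t.2 hin⟩,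
            he_mono (t.1 + 1) i (by omega) (by omega) hin⟩) ?_
        intro a c h
        simp only [Subtype.mk.injEq, Fin.mk.injEq] at h
        exact Fin.ext h
  have hup : Fintype.card {j : Fin m // e i ≤ b (j.1 + 1)} ≤ i - 1 :=
    calc Fintype.card {j : Fin m // e i ≤ b (j.1 + 1)}
        ≤ Fintype.card (Fin (i - 1)) := by
          refine Fintype.card_le_of_injective (fun j => ⟨j.1.1, ?_⟩) ?_
          · by_contra hge
            push_neg at hge
            have hij : i ≤ j.1.1 + 1 := by omega
            have h5 := hb_mono i (j.1.1 + 1) h1i hij (by omega)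
            have h6 := j.2
            omega
          · intro a c h
            simp only [Fin.mk.injEq] at h
            exact Subtype.ext (Fin.ext h)
      _ = i - 1 := Fintype.card_fin _
  omega

end Core3

section Constr
variable {K : Type*} [Field K]

/-- Block-diagonal inclusion matrix. -/
def Tinc (K : Type*) [Field K] (m n : ℕ) (b e : ℕ → ℕ) :
    Matrix (Σ i : Fin m, Fin (b (i.1 + 1))) (Σ j : Fin n, Fin (e (j.1 + 1))) K :=
  fun x y => if x.1.1 = y.1.1 ∧ (x.2 : ℕ) = (y.2 : ℕ) then 1 else 0

lemma Tinc_mulVec {m n : ℕ} {b e : ℕ → ℕ} (v : (Σ j : Fin n, Fin (e (j.1 + 1))) → K)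
    (x : Σ i : Fin m, Fin (b (i.1 + 1))) :
    (Tinc K m n b e *ᵥ v) x =
      if h : x.1.1 < n ∧ (x.2 : ℕ) < e (x.1.1 + 1) then
        v ⟨⟨x.1.1, h.1⟩, ⟨(x.2 : ℕ), h.2⟩⟩ else 0 := by
  rw [mulVec, dotProduct]
  split
  case isTrue h =>
    rw [Finset.sum_eq_single (⟨⟨x.1.1, h.1⟩, ⟨(x.2 : ℕ), h.2⟩⟩ : Σ j : Fin n, Fin (e (j.1 + 1)))]
    · simp [Tinc]
    · intro y _ hy
      unfold Tinc
      split
      case isTrue hc =>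
        exfalso
        apply hy
        obtain ⟨j, t⟩ := y
        obtain ⟨h1, h2⟩ := hc
        simp only at h1 h2
        have hj : j = ⟨x.1.1, h.1⟩ := by ext; exact h1.symm
        subst hj
        simp only [Sigma.mk.inj_iff, heq_eq_eq, true_and]
        ext
        exact h2.symm
      case isFalse => simp
    · intro hne; exact absurd (Finset.mem_univ _) hne
  case isFalse h =>
    apply Finset.sum_eq_zero
    intro y _
    unfold Tinc
    split
    case isTrue hc =>
      exfalso
      obtain ⟨h1, h2⟩ := hc
      have hy1 := y.1.isLt
      have hy2 := y.2.isLt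
      have hbb : e (y.1.1 + 1) = e (x.1.1 + 1) := by rw [h1]
      omega
    case isFalse => simp

lemma Tinc_injective {m n : ℕ} {b e : ℕ → ℕ} (hnm : n ≤ m)
    (hbe : ∀ i, 1 ≤ i → i ≤ n → e i ≤ b i) :
    Function.Injective (Tinc K m n b e).mulVecLin := by
  rw [← LinearMap.ker_eq_bot]
  rw [Matrix.ker_mulVecLin_eq_bot_iff]
  intro v hv
  funext y
  have hyb : (y.2 : ℕ) < b (y.1.1 + 1) :=
    lt_of_lt_of_le y.2.isLt (hbe (y.1.1 + 1) (by omega) (by omega))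
  have := congrFun hv ⟨⟨y.1.1, lt_of_lt_of_le y.1.isLt hnm⟩, ⟨(y.2 : ℕ), hyb⟩⟩
  rw [Tinc_mulVec] at this
  simp only [Pi.zero_apply] at this
  rw [dif_pos ⟨y.1.isLt, y.2.isLt⟩] at this
  rw [show (⟨⟨y.1.1, y.1.isLt⟩, ⟨(y.2 : ℕ), y.2.isLt⟩⟩ : Σ j : Fin n, Fin (e (j.1 + 1))) = y
    from by obtain ⟨⟨j, hj⟩, ⟨t, ht⟩⟩ := y; rfl] at this
  exact this

lemma Tinc_intertwine {m n : ℕ} {b e : ℕ → ℕ} (hnm : n ≤ m)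
    (hbe : ∀ i, 1 ≤ i → i ≤ n → e i ≤ b i) :
    Jnil K m b * Tinc K m n b e = Tinc K m n b e * Jnil K n e := by
  have key : ∀ v : (Σ j : Fin n, Fin (e (j.1 + 1))) → K,
      Jnil K m b *ᵥ (Tinc K m n b e *ᵥ v) = Tinc K m n b e *ᵥ (Jnil K n e *ᵥ v) := by
    intro v
    funext x
    rw [Jnil_mulVec, Tinc_mulVec]
    unfold JExt
    by_cases h1 : (x.2 : ℕ) + 1 < b (x.1.1 + 1)
    · rw [dif_pos h1, Tinc_mulVec]
      by_cases h2 : x.1.1 < n ∧ (x.2 : ℕ) + 1 < e (x.1.1 + 1)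
      · rw [dif_pos h2]
        rw [dif_pos ⟨h2.1, by omega⟩]
        rw [Jnil_mulVec]
        unfold JExt
        rw [dif_pos h2.2]
      · rw [dif_neg h2]
        by_cases h3 : x.1.1 < n ∧ (x.2 : ℕ) < e (x.1.1 + 1)
        · rw [dif_pos h3, Jnil_mulVec]
          unfold JExt
          dsimp only
          rw [dif_neg (by omega)]
        · rw [dif_neg h3]
    · rw [dif_neg h1]
      by_cases h3 : x.1.1 < n ∧ (x.2 : ℕ) < e (x.1.1 + 1)
      · rw [dif_pos h3, Jnil_mulVec]
        unfold JExt
        dsimp only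
        have hle : e (x.1.1 + 1) ≤ b (x.1.1 + 1) :=
          hbe (x.1.1 + 1) (by omega) (by omega)
        rw [dif_neg (by omega)]
      · rw [dif_neg h3]
  apply Matrix.ext
  intro x y
  have h := congrFun (key (Pi.single y 1)) x
  rw [mulVec_mulVec, mulVec_mulVec, mulVec_single_one, mulVec_single_one] at h
  simpa using h

end Constr

section Final
variable {K : Type*} [Field K]

lemma nilpotent_core {m n : ℕ} {b e : ℕ → ℕ}
    (hb_pos : ∀ i, 1 ≤ i → i ≤ m → 1 ≤ b i)
    (hb_mono : ∀ i j, 1 ≤ i → i ≤ j → j ≤ m → b j ≤ b i)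
    (he_pos : ∀ i, 1 ≤ i → i ≤ n → 1 ≤ e i)
    (he_mono : ∀ i j, 1 ≤ i → i ≤ j → j ≤ n → e j ≤ e i) :
    (∃ T : Matrix (Σ i : Fin m, Fin (b (i.1 + 1))) (Σ j : Fin n, Fin (e (j.1 + 1))) K,
        Function.Injective T.mulVecLin ∧ Jnil K m b * T = T * Jnil K n e) ↔
      (n ≤ m ∧ ∀ i, 1 ≤ i → i ≤ n → e i ≤ b i) := by
  constructor
  · rintro ⟨T, hinj, hT⟩
    exact counting hb_pos hb_mono he_pos he_mono
      (fun k => card_le_of_intertwine T hinj hT k)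
  · rintro ⟨h1, h2⟩
    exact ⟨Tinc K m n b e, Tinc_injective h1 h2, Tinc_intertwine h1 h2⟩

lemma RpB_eq (p : K) (m : ℕ) (b : ℕ → ℕ) :
    RpB K p m b = p • (1 : Matrix _ _ K) + Jnil K m b := by
  ext x y
  simp only [RpB, Jnil, Matrix.add_apply, Matrix.smul_apply, Matrix.one_apply, smul_eq_mul]
  obtain ⟨i, s⟩ := x
  obtain ⟨j, t⟩ := y
  by_cases h1 : i = j
  · subst h1
    have hxy : (⟨i, s⟩ : Σ i : Fin m, Fin (b (i.1 + 1))) = ⟨i, t⟩ ↔ (s : ℕ) = (t : ℕ) := by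
      simp [Sigma.mk.inj_iff, Fin.ext_iff]
    rw [if_pos rfl]
    by_cases h2 : (s : ℕ) = (t : ℕ)
    · rw [if_pos h2, if_pos (hxy.mpr h2)]
      by_cases h3 : (t : ℕ) = (s : ℕ) + 1
      · rw [if_pos h3, if_pos ⟨rfl, h3⟩]
        ring
      · rw [if_neg h3, if_neg (fun hc => h3 hc.2)]
        ring
    · rw [if_neg h2, if_neg (fun h => h2 (hxy.mp h))]
      by_cases h3 : (t : ℕ) = (s : ℕ) + 1
      · rw [if_pos h3, if_pos ⟨rfl, h3⟩]
        ring
      · rw [if_neg h3, if_neg (fun hc => h3 hc.2)]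
        ring
  · have hxy : (⟨i, s⟩ : Σ i : Fin m, Fin (b (i.1 + 1))) ≠ ⟨j, t⟩ := by
      intro h
      exact h1 (congrArg Sigma.fst h)
    rw [if_neg h1, if_neg hxy, if_neg (fun hc => h1 hc.1)]
    ring

end Final

/-- Theorem 11, one point: `⊕ⱼ R_{p, e j}` embeds into `⊕ᵢ R_{p, b i}`
iff `m ≥ n` and `b i ≥ e i` for `1 ≤ i ≤ n`; equivalently, for nilpotent operators
of Jordan types `(b i)` and `(e j)` there is an injective intertwining linear map
iff the same numerical condition holds. -/
theorem regular_one_point_subrep_iff (K : Type*) [Field K] (p : K)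
    (m n : ℕ) (b e : ℕ → ℕ)
    (hb_pos : ∀ i, 1 ≤ i → i ≤ m → 1 ≤ b i)
    (hb_mono : ∀ i j, 1 ≤ i → i ≤ j → j ≤ m → b j ≤ b i)
    (he_pos : ∀ i, 1 ≤ i → i ≤ n → 1 ≤ e i)
    (he_mono : ∀ i j, 1 ≤ i → i ≤ j → j ≤ n → e j ≤ e i) :
    ((∃ (ψ φ : Matrix (Σ i : Fin m, Fin (b (i.1 + 1))) (Σ j : Fin n, Fin (e (j.1 + 1))) K),
        Function.Injective ψ.mulVecLin ∧ Function.Injective φ.mulVecLin ∧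
        (1 : Matrix _ _ K) * φ = ψ * (1 : Matrix _ _ K) ∧
        RpB K p m b * φ = ψ * RpB K p n e) ↔
      (n ≤ m ∧ ∀ i, 1 ≤ i → i ≤ n → e i ≤ b i)) ∧
    ((∃ T : Matrix (Σ i : Fin m, Fin (b (i.1 + 1))) (Σ j : Fin n, Fin (e (j.1 + 1))) K,
        Function.Injective T.mulVecLin ∧ Jnil K m b * T = T * Jnil K n e) ↔
      (n ≤ m ∧ ∀ i, 1 ≤ i → i ≤ n → e i ≤ b i)) := by
  have core := nilpotent_core (K := K) hb_pos hb_mono he_pos he_mono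
  refine ⟨?_, core⟩
  constructor
  · rintro ⟨ψ, φ, hψ, hφ, hid, hcomm⟩
    have hφψ : φ = ψ := by
      have hid' : (1 : Matrix (Σ i : Fin m, Fin (b (i.1 + 1))) (Σ i : Fin m, Fin (b (i.1 + 1))) K) * φ = ψ * (1 : Matrix (Σ j : Fin n, Fin (e (j.1 + 1))) (Σ j : Fin n, Fin (e (j.1 + 1))) K) := hid
      rwa [Matrix.one_mul, Matrix.mul_one] at hid'
    subst hφψ
    rw [RpB_eq, RpB_eq, Matrix.add_mul, Matrix.mul_add, Matrix.smul_mul, Matrix.mul_smul,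
      Matrix.one_mul, Matrix.mul_one] at hcomm
    have hJ : Jnil K m b * φ = φ * Jnil K n e := by
      exact add_left_cancel hcomm
    exact core.mp ⟨φ, hφ, hJ⟩
  · intro h
    obtain ⟨T, hinj, hT⟩ := core.mpr h
    refine ⟨T, T, hinj, hinj, by show (1 : Matrix (Σ i : Fin m, Fin (b (i.1 + 1))) (Σ i : Fin m, Fin (b (i.1 + 1))) K) * T = T * (1 : Matrix (Σ j : Fin n, Fin (e (j.1 + 1))) (Σ j : Fin n, Fin (e (j.1 + 1))) K); rw [Matrix.one_mul, Matrix.mul_one], ?_⟩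
    rw [RpB_eq, RpB_eq, Matrix.add_mul, Matrix.mul_add, Matrix.smul_mul, Matrix.mul_smul,
      Matrix.one_mul, Matrix.mul_one, hT]
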